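/- Under the hypotheses of the average-of-singular-series proposition, if additionally P_{h∈H}(q | Δ(h)) ≤ C^{ω(q)}/q for all squarefree q ≤ Q, then E_{h∈H} g(h) = 1 + O(w^{−1} (log(2+w))^{O(1)}) + O_ε(Q^{−1} max_{h∈H} |Δ(h)|^ε). -/

import Mathlib

open Finset


private lemma ms_prod_le_tprod {ι : Type*} {f : ι → ℝ} (h1 : ∀ i, 1 ≤ f i)
    (hf : Multipliable f) (s : Finset ι) : ∏ i ∈ s, f i ≤ ∏' i, f i := by
  refine ge_of_tendsto hf.hasProd ?_
  filter_upwards [Filter.eventually_ge_atTop s] with u hsu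
  classical
  rw [← Finset.prod_sdiff hsu]
  have h0 : (0:ℝ) ≤ ∏ i ∈ s, f i := Finset.prod_nonneg fun i _ => le_trans zero_le_one (h1 i)
  have h2 : (1:ℝ) ≤ ∏ i ∈ u \ s, f i := by
    have := Finset.prod_le_prod (f := fun _ => (1:ℝ)) (g := f)
      (fun i _ => zero_le_one) (fun i (_ : i ∈ u \ s) => h1 i)
    simpa using this
  exact le_mul_of_one_le_left h0 h2

private lemma ms_one_le_tprod {ι : Type*} {f : ι → ℝ} (h1 : ∀ i, 1 ≤ f i)
    (hf : Multipliable f) : 1 ≤ ∏' i, f i := by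
  simpa using ms_prod_le_tprod h1 hf ∅

private lemma ms_sum_map_le {α : Type*} (H : Multiset α) (f g : α → ℝ)
    (h : ∀ x ∈ H, f x ≤ g x) : (H.map f).sum ≤ (H.map g).sum := by
  induction H using Multiset.induction_on with
  | empty => simp
  | cons a s ih =>
      simp only [Multiset.map_cons, Multiset.sum_cons]
      exact add_le_add (h a (Multiset.mem_cons_self a s))
        (ih fun x hx => h x (Multiset.mem_cons_of_mem hx))

private lemma ms_sum_map_swap {α β : Type*} (H : Multiset α) (D : Finset β) (f : β → α → ℝ) :
    (H.map (fun h => ∑ d ∈ D, f d h)).sum = ∑ d ∈ D, (H.map (f d)).sum := by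
  induction H using Multiset.induction_on with
  | empty => simp
  | cons a s ih =>
      simp [ih, Finset.sum_add_distrib]

private lemma ms_sum_map_ite {α : Type*} (H : Multiset α) (P : α → Prop) [DecidablePred P]
    (c : ℝ) : (H.map (fun h => if P h then c else 0)).sum
      = c * (Multiset.card (H.filter P) : ℝ) := by
  induction H using Multiset.induction_on with
  | empty => simp
  | cons a s ih =>
      by_cases hP : P a
      · simp [Multiset.filter_cons_of_pos _ hP, hP, ih, mul_add]; ring
      · simp [Multiset.filter_cons_of_neg _ hP, hP, ih]


private lemma ms_squarefree_prod {s : Finset ℕ} (hs : ∀ p ∈ s, p.Prime) :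
    Squarefree (∏ p ∈ s, p) := by
  classical
  induction s using Finset.induction_on with
  | empty => simpa using squarefree_one
  | @insert a s hns ih =>
      rw [Finset.prod_insert hns]
      have ha : a.Prime := hs a (Finset.mem_insert_self a s)
      have hrest : ∀ p ∈ s, p.Prime := fun p hp => hs p (Finset.mem_insert_of_mem hp)
      refine (Nat.squarefree_mul ?_).mpr ⟨ha.prime.squarefree, ih hrest⟩
      refine Nat.Coprime.prod_right fun p hp => ?_
      exact (Nat.coprime_primes ha (hrest p hp)).mpr (fun h => hns (h ▸ hp))

/-- divisor bound: (1+A)^{|S|} ≤ C₁ n^ε for S ⊆ primeFactors n -/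
private lemma ms_divisor_bound {A ε : ℝ} (hA : 0 < A) (hε : 0 < ε) (n : ℕ) (hn : n ≠ 0)
    (S : Finset ℕ) (hS : S ⊆ n.primeFactors) :
    (1+A) ^ S.card ≤ (1+A) ^ (⌊(1+A) ^ (1/ε)⌋₊) * (n:ℝ) ^ ε := by
  classical
  set K : ℝ := (1+A) ^ (1/ε) with hK
  have h1A : (1:ℝ) < 1 + A := by linarith
  have hK1 : (1:ℝ) ≤ K := Real.one_le_rpow h1A.le (by positivity)
  set m : ℕ := ⌊K⌋₊ with hm
  set Ssmall := S.filter (fun p => p ≤ m) with hSsmall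
  set Sbig := S.filter (fun p => ¬ p ≤ m) with hSbig
  have hcard : Ssmall.card + Sbig.card = S.card := Finset.card_filter_add_card_filter_not _
  have hsplit : (1+A) ^ S.card = (1+A) ^ Ssmall.card * (1+A) ^ Sbig.card := by
    rw [← pow_add, hcard]
  -- small part
  have hsmall_card : Ssmall.card ≤ m := by
    have hsub : Ssmall ⊆ Finset.Icc 1 m := by
      intro p hp
      rw [hSsmall, Finset.mem_filter] at hp
      have hp2 := Nat.prime_of_mem_primeFactors (hS hp.1)
      exact Finset.mem_Icc.mpr ⟨hp2.one_lt.le, hp.2⟩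
    simpa using Finset.card_le_card hsub
  have hsmall : (1+A) ^ Ssmall.card ≤ (1+A) ^ m := pow_le_pow_right₀ h1A.le hsmall_card
  -- big part
  have hbig : (1+A) ^ Sbig.card ≤ (n:ℝ) ^ ε := by
    have h1 : (1+A) ^ Sbig.card = ∏ p ∈ Sbig, (1+A) := by rw [Finset.prod_const]
    have h2 : ∀ p ∈ Sbig, (1+A) ≤ (p:ℝ) ^ ε := by
      intro p hp
      rw [hSbig, Finset.mem_filter] at hp
      have hpK : K ≤ (p:ℝ) := by
        have : m < p := Nat.lt_of_not_le hp.2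
        have h3 : K < (m:ℝ) + 1 := Nat.lt_floor_add_one K
        have : (m:ℝ) + 1 ≤ (p:ℝ) := by exact_mod_cast this
        linarith
      calc (1+A) = K ^ ε := by
            rw [hK, ← Real.rpow_mul (by linarith : (0:ℝ) ≤ 1 + A),
              one_div_mul_cancel hε.ne', Real.rpow_one]
          _ ≤ (p:ℝ) ^ ε := Real.rpow_le_rpow (by positivity) hpK hε.le
    calc (1+A) ^ Sbig.card = ∏ p ∈ Sbig, (1+A) := h1
      _ ≤ ∏ p ∈ Sbig, (p:ℝ) ^ ε := Finset.prod_le_prod (fun _ _ => by positivity) h2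
      _ = ((∏ p ∈ Sbig, (p:ℕ) : ℕ) : ℝ) ^ ε := by
          rw [Real.finset_prod_rpow _ _ (fun i _ => by positivity)]
          push_cast
          rfl
      _ ≤ (n:ℝ) ^ ε := by
          refine Real.rpow_le_rpow (by positivity) ?_ hε.le
          have hdvd : (∏ p ∈ Sbig, p) ∣ n := by
            refine dvd_trans ?_ (Nat.prod_primeFactors_dvd n)
            exact Finset.prod_dvd_prod_of_subset _ _ _ (subset_trans (Finset.filter_subset _ _) hS)
          exact_mod_cast Nat.le_of_dvd (Nat.pos_of_ne_zero hn) hdvd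
  calc (1+A) ^ S.card = (1+A) ^ Ssmall.card * (1+A) ^ Sbig.card := hsplit
    _ ≤ (1+A) ^ m * (n:ℝ) ^ ε := by
        refine mul_le_mul hsmall hbig (by positivity) (by positivity)


-- Σ over a finset of primes of (if w < p then 1/p^2 else 0) ≤ 2 / w
private lemma ms_finset_primes_sq_sum {w : ℝ} (hw : 1 ≤ w) (s : Finset ℕ)
    (c : ℝ) (hc : 0 ≤ c) :
    ∑ p ∈ s, (if w < (p:ℝ) then c / (p:ℝ)^2 else 0) ≤ c * (2 / w) := by
  classical
  set m : ℕ := ⌊w⌋₊ with hm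
  have hw0 : (0:ℝ) < w := lt_of_lt_of_le one_pos hw
  set N : ℕ := (s.sup id) + 1 with hN
  have hstep : ∑ p ∈ s, (if w < (p:ℝ) then c / (p:ℝ)^2 else 0)
      = ∑ p ∈ s.filter (fun p : ℕ => w < (p:ℝ)), c / (p:ℝ)^2 :=
    (Finset.sum_filter _ _).symm
  have hsub : s.filter (fun p : ℕ => w < (p:ℝ)) ⊆ Finset.Ioo m N := by
    intro p hp
    rw [Finset.mem_filter] at hp
    refine Finset.mem_Ioo.mpr ⟨?_, ?_⟩
    · exact (Nat.floor_lt hw0.le).mpr hp.2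
    · exact Nat.lt_succ_of_le (Finset.le_sup (f := id) hp.1)
  have h2 : ∑ p ∈ s.filter (fun p : ℕ => w < (p:ℝ)), c / (p:ℝ)^2
      ≤ ∑ p ∈ Finset.Ioo m N, c / (p:ℝ)^2 :=
    Finset.sum_le_sum_of_subset_of_nonneg hsub (fun i _ _ => by positivity)
  have h3 : ∑ p ∈ Finset.Ioo m N, c / (p:ℝ)^2 = c * ∑ p ∈ Finset.Ioo m N, ((p:ℝ)^2)⁻¹ := by
    rw [Finset.mul_sum]; exact Finset.sum_congr rfl (fun i _ => by rw [div_eq_mul_inv])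
  have h4 : ∑ p ∈ Finset.Ioo m N, ((p:ℝ)^2)⁻¹ ≤ 2 / ((m:ℝ) + 1) := by
    have := sum_Ioo_inv_sq_le (α := ℝ) m N
    simpa using this
  have h5 : 2 / ((m:ℝ) + 1) ≤ 2 / w := by
    refine div_le_div_of_nonneg_left (by norm_num) hw0 ?_
    have := Nat.lt_floor_add_one w
    linarith
  calc ∑ p ∈ s, (if w < (p:ℝ) then c / (p:ℝ)^2 else 0)
      = ∑ p ∈ s.filter (fun p : ℕ => w < (p:ℝ)), c / (p:ℝ)^2 := hstep
    _ ≤ ∑ p ∈ Finset.Ioo m N, c / (p:ℝ)^2 := h2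
    _ = c * ∑ p ∈ Finset.Ioo m N, ((p:ℝ)^2)⁻¹ := h3
    _ ≤ c * (2 / ((m:ℝ)+1)) := by exact mul_le_mul_of_nonneg_left h4 hc
    _ ≤ c * (2 / w) := mul_le_mul_of_nonneg_left h5 hc

section
variable {w A : ℝ}


private lemma ms_tprod_le (hA : 0 < A) (hw : 1 ≤ w) {D : ℤ} (hD : D ≠ 0)
    {f : Nat.Primes → ℝ}
    (hm : Multipliable f)
    (h1 : ∀ p : Nat.Primes, 1 ≤ f p)
    (h2 : ∀ p : Nat.Primes, f p ≤ 1 + A / ((p:ℕ):ℝ))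
    (h3 : ∀ p : Nat.Primes, ¬(((p:ℕ):ℤ) ∣ D) → f p ≤ 1 + A / ((p:ℕ):ℝ)^2)
    (h4 : ∀ p : Nat.Primes, ((p:ℕ):ℝ) ≤ w → f p = 1) :
    ∏' p, f p ≤ (∏ q ∈ D.natAbs.primeFactors.filter (fun q : ℕ => w < (q:ℝ)), (1 + A/(q:ℝ)))
      * Real.exp (2*A/w) := by
  classical
  have hw0 : (0:ℝ) < w := lt_of_lt_of_le one_pos hw
  set S : Finset ℕ := D.natAbs.primeFactors.filter (fun q : ℕ => w < (q:ℝ)) with hS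
  set c : Nat.Primes → ℝ :=
    fun p => if (w < ((p:ℕ):ℝ) ∧ ((p:ℕ):ℤ) ∣ D) then 1 + A/((p:ℕ):ℝ) else 1 with hc
  set u : Nat.Primes → ℝ := fun p => if w < ((p:ℕ):ℝ) then A/((p:ℕ):ℝ)^2 else 0 with hu
  have hppos : ∀ p : Nat.Primes, (0:ℝ) < ((p:ℕ):ℝ) := fun p => by
    exact_mod_cast p.2.pos
  have hc1 : ∀ p, 1 ≤ c p := by
    intro p
    rw [hc]; dsimp only
    split
    · have := (hppos p)
      have : 0 ≤ A / ((p:ℕ):ℝ) := le_of_lt (div_pos hA this)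
      linarith
    · exact le_refl 1
  have hu0 : ∀ p, 0 ≤ u p := by
    intro p; rw [hu]; dsimp only; split
    · positivity
    · exact le_refl 0
  -- the finite support finset for c
  set s₀ : Finset Nat.Primes := S.subtype Nat.Prime with hs₀
  have hmem_s₀ : ∀ p : Nat.Primes, p ∈ s₀ ↔ (p:ℕ) ∈ S := by
    intro p; rw [hs₀]; exact Finset.mem_subtype
  have hc_out : ∀ p ∉ s₀, c p = 1 := by
    intro p hp
    rw [hc]; dsimp only
    rw [if_neg]
    intro ⟨hpw, hpd⟩
    refine hp ((hmem_s₀ p).mpr ?_)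
    rw [hS, Finset.mem_filter, Nat.mem_primeFactors]
    refine ⟨⟨p.2, ?_, by simpa using hD⟩, hpw⟩
    exact Int.natCast_dvd_natCast.mp (Int.dvd_natAbs.mpr hpd)
  have hasProd_c : HasProd c (∏ p ∈ s₀, c p) := hasProd_prod_of_ne_finset_one hc_out
  -- summability of u
  have hbase : Summable (fun p : Nat.Primes => A * (1/((p:ℕ):ℝ)^2)) := by
    have b0 : Summable (fun n : ℕ => A * (1/(n:ℝ)^2)) :=
      (Real.summable_one_div_nat_pow.mpr one_lt_two).mul_left A
    exact b0.comp_injective Nat.Primes.coe_nat_injective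
  have hu_sum : Summable u := by
    refine Summable.of_nonneg_of_le hu0 ?_ hbase
    intro p
    rw [hu]; dsimp only
    split
    · rw [mul_one_div]
    · positivity
  have hasProd_e : HasProd (fun p => Real.exp (u p)) (Real.exp (∑' p, u p)) := by
    have h := hu_sum.hasSum
    have h2 : Filter.Tendsto (fun s : Finset Nat.Primes => Real.exp (∑ p ∈ s, u p))
        Filter.atTop (nhds (Real.exp (∑' p, u p))) :=
      (Real.continuous_exp.continuousAt.tendsto).comp h
    have heq : (fun s : Finset Nat.Primes => Real.exp (∑ p ∈ s, u p))
        = fun s : Finset Nat.Primes => ∏ p ∈ s, Real.exp (u p) := by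
      funext s; exact Real.exp_sum s u
    rwa [heq] at h2
  have hasProd_b : HasProd (fun p => c p * Real.exp (u p))
      ((∏ p ∈ s₀, c p) * Real.exp (∑' p, u p)) := hasProd_c.mul hasProd_e
  have hb : ∀ p, f p ≤ c p * Real.exp (u p) := by
    intro p
    by_cases hpw : w < ((p:ℕ):ℝ)
    · by_cases hpd : ((p:ℕ):ℤ) ∣ D
      · have hcp : c p = 1 + A/((p:ℕ):ℝ) := by rw [hc]; exact if_pos ⟨hpw, hpd⟩
        have he1 : 1 ≤ Real.exp (u p) := Real.one_le_exp (hu0 p)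
        have hcpos : 0 ≤ c p := le_trans zero_le_one (hc1 p)
        calc f p ≤ 1 + A/((p:ℕ):ℝ) := h2 p
          _ = c p := hcp.symm
          _ ≤ c p * Real.exp (u p) := le_mul_of_one_le_right hcpos he1
      · have hcp : c p = 1 := by rw [hc]; exact if_neg (fun h => hpd h.2)
        have hup : u p = A/((p:ℕ):ℝ)^2 := by rw [hu]; exact if_pos hpw
        calc f p ≤ 1 + A/((p:ℕ):ℝ)^2 := h3 p hpd
          _ ≤ Real.exp (A/((p:ℕ):ℝ)^2) := by
              have := Real.add_one_le_exp (A/((p:ℕ):ℝ)^2); linarith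
          _ = c p * Real.exp (u p) := by rw [hcp, hup, one_mul]
    · have : f p = 1 := h4 p (le_of_not_gt hpw)
      have hcp : c p = 1 := by rw [hc]; exact if_neg (fun h => hpw h.1)
      have hup : u p = 0 := by rw [hu]; exact if_neg hpw
      rw [this, hcp, hup, one_mul, Real.exp_zero]
  have hb1 : ∀ p, 1 ≤ c p * Real.exp (u p) := fun p => le_trans (h1 p) (hb p)
  have hmain : ∏' p, f p ≤ (∏ p ∈ s₀, c p) * Real.exp (∑' p, u p) := by
    refine hasProd_le_of_prod_le hm.hasProd ?_
    intro s
    calc ∏ p ∈ s, f p ≤ ∏ p ∈ s, (c p * Real.exp (u p)) :=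
          Finset.prod_le_prod (fun p _ => le_trans zero_le_one (h1 p)) (fun p _ => hb p)
      _ ≤ ∏' p, (c p * Real.exp (u p)) := ms_prod_le_tprod hb1 hasProd_b.multipliable s
      _ = (∏ p ∈ s₀, c p) * Real.exp (∑' p, u p) := hasProd_b.tprod_eq
  -- identify the finite product
  have hprod_eq : (∏ p ∈ s₀, c p) = ∏ q ∈ S, (1 + A/(q:ℝ)) := by
    have step1 : (∏ p ∈ s₀, c p) = ∏ p ∈ s₀, (1 + A/((p:ℕ):ℝ)) := by
      refine Finset.prod_congr rfl ?_
      intro p hp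
      rw [hmem_s₀, hS, Finset.mem_filter, Nat.mem_primeFactors] at hp
      rw [hc]; dsimp only
      rw [if_pos]
      refine ⟨hp.2, ?_⟩
      exact dvd_trans (Int.natCast_dvd_natCast.mpr hp.1.2.1) (Int.natAbs_dvd.mpr dvd_rfl)
    rw [step1]
    have hfil : S.filter Nat.Prime = S := by
      refine Finset.filter_true_of_mem ?_
      intro q hq
      rw [hS, Finset.mem_filter] at hq
      exact Nat.prime_of_mem_primeFactors hq.1
    conv_rhs => rw [← hfil, ← Finset.subtype_map]
    rw [Finset.prod_map, hs₀]
    rfl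
  -- bound the tsum
  have htsum : (∑' p, u p) ≤ 2*A/w := by
    refine hasSum_le_of_sum_le hu_sum.hasSum ?_
    intro s
    have himg : ∑ p ∈ s, u p
        = ∑ n ∈ s.image (fun p : Nat.Primes => (p:ℕ)), (if w < (n:ℝ) then A/(n:ℝ)^2 else 0) := by
      exact (Finset.sum_image (f := fun n : ℕ => if w < (n:ℝ) then A/(n:ℝ)^2 else 0)
        (fun p _ q _ h => Nat.Primes.coe_nat_injective h)).symm
    rw [himg]
    calc _ ≤ A * (2/w) := ms_finset_primes_sq_sum hw _ A hA.le
      _ = 2*A/w := by ring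
  have hSnonneg : (0:ℝ) ≤ ∏ q ∈ S, (1 + A/(q:ℝ)) :=
    Finset.prod_nonneg fun q hq => by positivity
  calc ∏' p, f p ≤ (∏ p ∈ s₀, c p) * Real.exp (∑' p, u p) := hmain
    _ = (∏ q ∈ S, (1 + A/(q:ℝ))) * Real.exp (∑' p, u p) := by rw [hprod_eq]
    _ ≤ (∏ q ∈ S, (1 + A/(q:ℝ))) * Real.exp (2*A/w) := by
        exact mul_le_mul_of_nonneg_left (Real.exp_le_exp.mpr htsum) hSnonneg
end


/-- Δ(h) = ∏_{i<j, h_i ≠ h_j} (h_i − h_j). -/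
def Deltah {t : ℕ} (h : Fin t → ℤ) : ℤ :=
  ∏ p ∈ Finset.univ.filter (fun p : Fin t × Fin t => p.1 < p.2 ∧ h p.1 ≠ h p.2),
    (h p.1 - h p.2)

private lemma ms_deltah_ne_zero {t : ℕ} (h : Fin t → ℤ) : Deltah h ≠ 0 := by
  rw [Deltah]
  rw [Finset.prod_ne_zero_iff]
  intro p hp
  exact sub_ne_zero.mpr (Finset.mem_filter.mp hp).2.2

private lemma ms_sum_map_add {α : Type*} (H : Multiset α) (f g : α → ℝ) :
    (H.map (fun x => f x + g x)).sum = (H.map f).sum + (H.map g).sum := by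
  induction H using Multiset.induction_on with
  | empty => simp
  | cons a s ih => simp [ih]; ring

private lemma ms_sum_map_const {α : Type*} (H : Multiset α) (c : ℝ) :
    (H.map (fun _ => c)).sum = (Multiset.card H : ℝ) * c := by
  induction H using Multiset.induction_on with
  | empty => simp
  | cons a s ih => simp [ih]; ring

private lemma ms_exp_sub_one {x y : ℝ} (hx : 0 ≤ x) (hy : Real.exp x ≤ y) :
    Real.exp x - 1 ≤ x * y := by
  have h1 := Real.add_one_le_exp (-x)
  have h2 : Real.exp (-x) * Real.exp x = 1 := by rw [← Real.exp_add]; simp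
  have h3 : (0:ℝ) < Real.exp x := Real.exp_pos _
  have k1 := mul_le_mul_of_nonneg_right h1 h3.le
  rw [h2] at k1
  have k2 := mul_le_mul_of_nonneg_left hy hx
  nlinarith [k1, k2]

set_option maxHeartbeats 2000000 in
theorem stmt10 (t : ℕ) (A C₀ ε : ℝ) (hA : 0 < A) (hC₀ : 0 < C₀) (hε : 0 < ε) :
    ∃ C B : ℝ, 0 < C ∧ 0 < B ∧ ∀ w : ℝ, 1 ≤ w →
    ∀ (gp : ℕ → (Fin t → ℤ) → ℝ) (g : (Fin t → ℤ) → ℝ),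
    (∀ p : ℕ, p.Prime → ∀ h, 1 ≤ gp p h) →
    (∀ p : ℕ, p.Prime → ∀ h, gp p h ≤ 1 + A / p) →
    (∀ p : ℕ, p.Prime → ∀ h, ¬ ((p : ℤ) ∣ Deltah h) → gp p h ≤ 1 + A / (p : ℝ) ^ 2) →
    (∀ p : ℕ, p.Prime → (p : ℝ) ≤ w → ∀ h, gp p h = 1) →
    (∀ h, Multipliable fun p : Nat.Primes => gp (p : ℕ) h) →
    (∀ h, g h = ∏' p : Nat.Primes, gp (p : ℕ) h) →
    ∀ H : Multiset (Fin t → ℤ), H ≠ 0 →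
    ∀ Q : ℕ, 2 ≤ Q →
    (∀ q : ℕ, Squarefree q → q ≤ Q →
      ((Multiset.card (H.filter fun h => (q : ℤ) ∣ Deltah h)) : ℝ) /
        (Multiset.card H : ℝ) ≤ C₀ ^ q.primeFactors.card / (q : ℝ)) →
    ∀ M : ℝ, (∀ h ∈ H, |(Deltah h : ℝ)| ≤ M) →
    |(H.map g).sum / (Multiset.card H : ℝ) - 1| ≤
      C * (Real.log (2 + w)) ^ B / w + C * M ^ ε / (Q : ℝ) := by
  classical
  set C₁ : ℝ := (1+A) ^ (⌊(1+A) ^ (1/ε)⌋₊) with hC₁def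
  have hC₁pos : 0 < C₁ := by positivity
  set AC : ℝ := A * C₀ with hACdef
  have hACpos : 0 < AC := mul_pos hA hC₀
  set e2 : ℝ := Real.exp (2*A) with he2def
  have he2pos : 0 < e2 := Real.exp_pos _
  have he2ge1 : 1 ≤ e2 := Real.one_le_exp (by linarith)
  set C : ℝ := e2 * (2*AC*Real.exp (2*AC) + 2*A + C₁) with hCdef
  refine ⟨C, 1, by positivity, one_pos, ?_⟩
  intro w hw gp g hgp1 hgp2 hgp3 hgp4 hgpm hgdef H hH Q hQ hprob M hM
  have hw0 : (0:ℝ) < w := lt_of_lt_of_le one_pos hw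
  have hQ0 : (0:ℝ) < (Q:ℝ) := by exact_mod_cast lt_of_lt_of_le two_pos hQ
  set n : ℝ := (Multiset.card H : ℝ) with hndef
  have hn : 0 < n := by
    rw [hndef]
    have : 0 < Multiset.card H := Multiset.card_pos.mpr hH
    exact_mod_cast this
  -- M ≥ 1
  obtain ⟨h₀, hh₀⟩ := Multiset.exists_mem_of_ne_zero hH
  have hM1 : (1:ℝ) ≤ M := by
    refine le_trans ?_ (hM h₀ hh₀)
    have : Deltah h₀ ≠ 0 := ms_deltah_ne_zero h₀
    have : (1:ℤ) ≤ |Deltah h₀| := Int.one_le_abs (by simpa using this)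
    calc (1:ℝ) ≤ (|Deltah h₀| : ℤ) := by exact_mod_cast this
      _ = |((Deltah h₀ : ℤ) : ℝ)| := by push_cast; rfl
  have hMε0 : 0 ≤ M ^ ε := Real.rpow_nonneg (by linarith) ε
  -- basic per-h objects
  set S : (Fin t → ℤ) → Finset ℕ :=
    fun h => (Deltah h).natAbs.primeFactors.filter (fun q : ℕ => w < (q:ℝ)) with hSdef
  set π : Finset ℕ → ℝ := fun T => ∏ q ∈ T, (A/(q:ℝ)) with hπdef
  have hπ0 : ∀ T : Finset ℕ, (∀ q ∈ T, 0 < q) → 0 ≤ π T := by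
    intro T hT
    exact Finset.prod_nonneg fun q hq => le_of_lt (div_pos hA (by exact_mod_cast hT q hq))
  have hSprime : ∀ h, ∀ q ∈ S h, q.Prime := by
    intro h q hq
    rw [hSdef] at hq
    exact Nat.prime_of_mem_primeFactors (Finset.mem_filter.mp hq).1
  -- upper bound on each g h
  have hg_le : ∀ h, g h ≤ (∏ q ∈ S h, (1 + A/(q:ℝ))) * Real.exp (2*A/w) := by
    intro h
    rw [hgdef h]
    exact ms_tprod_le hA hw (ms_deltah_ne_zero h) (hgpm h)
      (fun p => hgp1 p p.2 h) (fun p => hgp2 p p.2 h)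
      (fun p hnd => hgp3 p p.2 h hnd) (fun p hple => hgp4 p p.2 hple h)
  have hg_ge1 : ∀ h, 1 ≤ g h := by
    intro h
    rw [hgdef h]
    exact ms_one_le_tprod (fun p => hgp1 p p.2 h) (hgpm h)
  -- expansion of the finite product
  set Tset : (Fin t → ℤ) → Finset (Finset ℕ) :=
    fun h => (S h).powerset.erase ∅ with hTsetdef
  set Small : (Fin t → ℤ) → ℝ :=
    fun h => ∑ T ∈ (Tset h).filter (fun T => (∏ q ∈ T, q) ≤ Q), π T with hSmalldef
  set Big : (Fin t → ℤ) → ℝ :=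
    fun h => ∑ T ∈ (Tset h).filter (fun T => ¬ (∏ q ∈ T, q) ≤ Q), π T with hBigdef
  have hT_pos : ∀ h, ∀ T ∈ Tset h, ∀ q ∈ T, 0 < q := by
    intro h T hT q hq
    have hTsub : T ⊆ S h := Finset.mem_powerset.mp (Finset.mem_erase.mp hT).2
    exact (hSprime h q (hTsub hq)).pos
  have hexpand : ∀ h, (∏ q ∈ S h, (1 + A/(q:ℝ))) = 1 + (Small h + Big h) := by
    intro h
    have h1 : (∏ q ∈ S h, (A/(q:ℝ) + 1)) = ∑ T ∈ (S h).powerset, π T := by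
      rw [Finset.prod_add]
      refine Finset.sum_congr rfl ?_
      intro T hT
      rw [hπdef]
      simp
    have h2 : ∑ T ∈ (S h).powerset, π T = π ∅ + ∑ T ∈ Tset h, π T := by
      rw [hTsetdef]
      exact (Finset.add_sum_erase _ π (Finset.empty_mem_powerset _)).symm
    have h3 : ∑ T ∈ Tset h, π T = Small h + Big h := by
      rw [hSmalldef, hBigdef]
      exact (Finset.sum_filter_add_sum_filter_not _ _ _).symm
    have h4 : π ∅ = 1 := by rw [hπdef]; simp
    calc (∏ q ∈ S h, (1 + A/(q:ℝ))) = ∏ q ∈ S h, (A/(q:ℝ) + 1) := by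
          refine Finset.prod_congr rfl fun q _ => by ring
      _ = ∑ T ∈ (S h).powerset, π T := h1
      _ = π ∅ + ∑ T ∈ Tset h, π T := h2
      _ = 1 + (Small h + Big h) := by rw [h3, h4]
  have hSmall0 : ∀ h, 0 ≤ Small h := by
    intro h
    rw [hSmalldef]
    refine Finset.sum_nonneg fun T hT => ?_
    exact hπ0 T (hT_pos h T (Finset.mem_filter.mp hT).1)
  have hBig0 : ∀ h, 0 ≤ Big h := by
    intro h
    rw [hBigdef]
    refine Finset.sum_nonneg fun T hT => ?_
    exact hπ0 T (hT_pos h T (Finset.mem_filter.mp hT).1)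
  -- pointwise upper bound
  have hφ : ∀ h, g h ≤ 1 + 2*A*e2/w + (e2 * Small h + e2 * Big h) := by
    intro h
    have he1le : Real.exp (2*A/w) ≤ e2 := by
      rw [he2def]
      refine Real.exp_le_exp.mpr ?_
      rw [div_le_iff₀ hw0]
      nlinarith [mul_le_mul_of_nonneg_left hw (by linarith : (0:ℝ) ≤ 2*A)]
    have he1m1 : Real.exp (2*A/w) - 1 ≤ 2*A*e2/w := by
      have h0 := ms_exp_sub_one (x := 2*A/w) (y := e2) (by positivity) he1le
      have h : (2*A/w) * e2 = 2*A*e2/w := by ring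
      linarith
    have hx0 : 0 ≤ Small h + Big h := add_nonneg (hSmall0 h) (hBig0 h)
    calc g h ≤ (∏ q ∈ S h, (1 + A/(q:ℝ))) * Real.exp (2*A/w) := hg_le h
      _ = (1 + (Small h + Big h)) * Real.exp (2*A/w) := by rw [hexpand h]
      _ = Real.exp (2*A/w) + (Small h + Big h) * Real.exp (2*A/w) := by ring
      _ ≤ (1 + 2*A*e2/w) + (Small h + Big h) * e2 := by
          refine add_le_add ?_ (mul_le_mul_of_nonneg_left he1le hx0)
          linarith [he1m1]
      _ = 1 + 2*A*e2/w + (e2 * Small h + e2 * Big h) := by ring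
  -- Big part bound
  have hBigle : ∀ h ∈ H, Big h ≤ C₁ * M ^ ε / (Q:ℝ) := by
    intro h hh
    have hMh : ((Deltah h).natAbs : ℝ) ≤ M := by
      calc ((Deltah h).natAbs : ℝ) = |((Deltah h : ℤ) : ℝ)| := by
            rw [Nat.cast_natAbs, Int.cast_abs]
        _ ≤ M := hM h hh
    have hdb : (1+A) ^ (S h).card ≤ C₁ * M ^ ε := by
      calc (1+A) ^ (S h).card ≤ C₁ * (((Deltah h).natAbs : ℕ) : ℝ) ^ ε := by
            rw [hC₁def]
            exact ms_divisor_bound hA hε _ (Int.natAbs_ne_zero.mpr (ms_deltah_ne_zero h)) _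
              (by rw [hSdef]; exact Finset.filter_subset _ _)
        _ ≤ C₁ * M ^ ε := by
            refine mul_le_mul_of_nonneg_left ?_ hC₁pos.le
            exact Real.rpow_le_rpow (by positivity) hMh hε.le
    have step1 : Big h ≤ ∑ T ∈ (Tset h).filter (fun T => ¬ (∏ q ∈ T, q) ≤ Q),
        A ^ T.card / (Q:ℝ) := by
      rw [hBigdef]
      refine Finset.sum_le_sum ?_
      intro T hT
      have hTm := (Finset.mem_filter.mp hT)
      have hQpr : (Q:ℝ) ≤ ((∏ q ∈ T, q : ℕ) : ℝ) := by
        exact_mod_cast le_of_lt (Nat.lt_of_not_le hTm.2)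
      have hπT : π T = A ^ T.card / ((∏ q ∈ T, q : ℕ) : ℝ) := by
        rw [hπdef]
        dsimp only
        rw [Finset.prod_div_distrib, Finset.prod_const]
        push_cast
        rfl
      rw [hπT]
      exact div_le_div_of_nonneg_left (by positivity) hQ0 hQpr
    have step2 : ∑ T ∈ (Tset h).filter (fun T => ¬ (∏ q ∈ T, q) ≤ Q),
        A ^ T.card / (Q:ℝ) ≤ ∑ T ∈ (S h).powerset, A ^ T.card / (Q:ℝ) := by
      refine Finset.sum_le_sum_of_subset_of_nonneg ?_ ?_
      · refine subset_trans (Finset.filter_subset _ _) ?_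
        rw [hTsetdef]
        exact Finset.erase_subset _ _
      · intro T _ _
        positivity
    have step3 : ∑ T ∈ (S h).powerset, A ^ T.card / (Q:ℝ)
        = (1+A) ^ (S h).card / (Q:ℝ) := by
      rw [← Finset.sum_div]
      congr 1
      have hpa := Finset.prod_add (fun _ : ℕ => A) (fun _ : ℕ => (1:ℝ)) (S h)
      simp only [Finset.prod_const, Finset.prod_const_one, one_pow, mul_one] at hpa
      rw [← hpa, add_comm]
    calc Big h ≤ ∑ T ∈ (Tset h).filter (fun T => ¬ (∏ q ∈ T, q) ≤ Q),
          A ^ T.card / (Q:ℝ) := step1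
      _ ≤ ∑ T ∈ (S h).powerset, A ^ T.card / (Q:ℝ) := step2
      _ = (1+A) ^ (S h).card / (Q:ℝ) := step3
      _ ≤ C₁ * M ^ ε / (Q:ℝ) := by gcongr
  -- Small part: compare with sum over d
  set D0 : Finset ℕ := (Finset.Icc 2 Q).filter
    (fun d => Squarefree d ∧ ∀ p ∈ d.primeFactors, w < (p:ℝ)) with hD0def
  set F : ℕ → (Fin t → ℤ) → ℝ :=
    fun d h => if (d:ℤ) ∣ Deltah h then A ^ (d.primeFactors.card) / (d:ℝ) else 0 with hFdef
  have hSmallle : ∀ h, Small h ≤ ∑ d ∈ D0, F d h := by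
    intro h
    rw [hSmalldef]
    set Ts := (Tset h).filter (fun T => (∏ q ∈ T, q) ≤ Q) with hTs
    have hTfacts : ∀ T ∈ Ts, T ⊆ S h ∧ T ≠ ∅ ∧ (∏ q ∈ T, q) ≤ Q := by
      intro T hT
      rw [hTs, Finset.mem_filter, hTsetdef, Finset.mem_erase, Finset.mem_powerset] at hT
      exact ⟨hT.1.2, hT.1.1, hT.2⟩
    have hpf : ∀ T ∈ Ts, (∏ q ∈ T, q).primeFactors = T := by
      intro T hT
      exact Nat.primeFactors_prod (fun p hp => hSprime h p ((hTfacts T hT).1 hp))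
    have hinj : ∀ T₁ ∈ Ts, ∀ T₂ ∈ Ts, (∏ q ∈ T₁, q) = (∏ q ∈ T₂, q) → T₁ = T₂ := by
      intro T₁ h₁ T₂ h₂ heq
      rw [← hpf T₁ h₁, ← hpf T₂ h₂, heq]
    have hterm : ∀ T ∈ Ts, π T = F (∏ q ∈ T, q) h := by
      intro T hT
      obtain ⟨hTsub, hTne, hTQ⟩ := hTfacts T hT
      have hdvd : ((∏ q ∈ T, q : ℕ) : ℤ) ∣ Deltah h := by
        have h1 : (∏ q ∈ T, q) ∣ (Deltah h).natAbs := by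
          refine dvd_trans ?_ (Nat.prod_primeFactors_dvd _)
          refine Finset.prod_dvd_prod_of_subset _ _ _ ?_
          refine subset_trans hTsub ?_
          rw [hSdef]
          exact Finset.filter_subset _ _
        exact dvd_trans (Int.natCast_dvd_natCast.mpr h1) (Int.natAbs_dvd.mpr dvd_rfl)
      rw [hFdef]
      dsimp only
      rw [if_pos hdvd, hpf T hT]
      rw [hπdef]
      dsimp only
      rw [Finset.prod_div_distrib, Finset.prod_const]
      push_cast
      rfl
    have himg : Ts.image (fun T => ∏ q ∈ T, q) ⊆ D0 := by
      intro d hd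
      rw [Finset.mem_image] at hd
      obtain ⟨T, hT, rfl⟩ := hd
      obtain ⟨hTsub, hTne, hTQ⟩ := hTfacts T hT
      rw [hD0def, Finset.mem_filter, Finset.mem_Icc]
      obtain ⟨q, hq⟩ := Finset.nonempty_iff_ne_empty.mpr hTne
      have hqp := hSprime h q (hTsub hq)
      have hdpos : 0 < ∏ p ∈ T, p :=
        Finset.prod_pos fun p hp => (hSprime h p (hTsub hp)).pos
      refine ⟨⟨?_, hTQ⟩, ms_squarefree_prod (fun p hp => hSprime h p (hTsub hp)), ?_⟩
      · exact le_trans hqp.two_le (Nat.le_of_dvd hdpos (Finset.dvd_prod_of_mem _ hq))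
      · intro p hp
        rw [hpf T hT] at hp
        have := hTsub hp
        rw [hSdef, Finset.mem_filter] at this
        exact this.2
    have hF0 : ∀ d ∈ D0, 0 ≤ F d h := by
      intro d hd
      rw [hD0def, Finset.mem_filter, Finset.mem_Icc] at hd
      rw [hFdef]
      dsimp only
      split
      · have : (0:ℝ) < (d:ℝ) := by exact_mod_cast lt_of_lt_of_le two_pos hd.1.1
        positivity
      · exact le_refl 0
    calc ∑ T ∈ Ts, π T = ∑ T ∈ Ts, F (∏ q ∈ T, q) h := Finset.sum_congr rfl hterm
      _ = ∑ d ∈ Ts.image (fun T => ∏ q ∈ T, q), F d h := (Finset.sum_image (f := fun d => F d h) hinj).symm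
      _ ≤ ∑ d ∈ D0, F d h := Finset.sum_le_sum_of_subset_of_nonneg himg
          (fun d hd _ => hF0 d hd)
  -- sum over H of Small
  have hSmallsum : (H.map Small).sum ≤ n * (2*AC*Real.exp (2*AC)/w) := by
    have step1 : (H.map Small).sum ≤ ∑ d ∈ D0, (H.map (F d)).sum := by
      rw [← ms_sum_map_swap H D0 F]
      exact ms_sum_map_le H _ _ (fun h _ => hSmallle h)
    have step2 : ∀ d ∈ D0, (H.map (F d)).sum
        ≤ n * ((A*C₀) ^ (d.primeFactors.card) / (d:ℝ)^2) := by
      intro d hd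
      rw [hD0def, Finset.mem_filter, Finset.mem_Icc] at hd
      have hd0 : (0:ℝ) < (d:ℝ) := by exact_mod_cast lt_of_lt_of_le two_pos hd.1.1
      have hcount : (H.map (F d)).sum
          = (A ^ (d.primeFactors.card) / (d:ℝ)) *
            (Multiset.card (H.filter fun h => (d:ℤ) ∣ Deltah h) : ℝ) := by
        rw [hFdef]
        exact ms_sum_map_ite H _ _
      rw [hcount]
      have hcard : (Multiset.card (H.filter fun h => (d:ℤ) ∣ Deltah h) : ℝ)
          ≤ n * (C₀ ^ d.primeFactors.card / (d:ℝ)) := by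
        have := hprob d hd.2.1 hd.1.2
        rw [div_le_div_iff₀ hn (by exact hd0)] at this
        calc (Multiset.card (H.filter fun h => (d:ℤ) ∣ Deltah h) : ℝ)
            = (Multiset.card (H.filter fun h => (d:ℤ) ∣ Deltah h) : ℝ) * (d:ℝ) / (d:ℝ) := by
              field_simp
          _ ≤ C₀ ^ d.primeFactors.card * n / (d:ℝ) := by gcongr
          _ = n * (C₀ ^ d.primeFactors.card / (d:ℝ)) := by ring
      calc (A ^ (d.primeFactors.card) / (d:ℝ)) *
            (Multiset.card (H.filter fun h => (d:ℤ) ∣ Deltah h) : ℝ)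
          ≤ (A ^ (d.primeFactors.card) / (d:ℝ)) *
            (n * (C₀ ^ d.primeFactors.card / (d:ℝ))) := by
            refine mul_le_mul_of_nonneg_left hcard (by positivity)
        _ = n * ((A*C₀) ^ (d.primeFactors.card) / (d:ℝ)^2) := by
            rw [mul_pow]
            ring
    have step3 : ∑ d ∈ D0, (A*C₀) ^ (d.primeFactors.card) / (d:ℝ)^2
        ≤ 2*AC*Real.exp (2*AC)/w := by
      set P0 : Finset ℕ := (Finset.range (Q+1)).filter
        (fun p => p.Prime ∧ w < (p:ℝ)) with hP0def
      have hD0facts : ∀ d ∈ D0, Squarefree d ∧ 2 ≤ d ∧ d ≤ Q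
          ∧ (∀ p ∈ d.primeFactors, w < (p:ℝ)) := by
        intro d hd
        rw [hD0def, Finset.mem_filter, Finset.mem_Icc] at hd
        exact ⟨hd.2.1, hd.1.1, hd.1.2, hd.2.2⟩
      have hpfsub : ∀ d ∈ D0, d.primeFactors ⊆ P0 := by
        intro d hd p hp
        obtain ⟨hsf, hd2, hdQ, hwp⟩ := hD0facts d hd
        rw [hP0def, Finset.mem_filter, Finset.mem_range]
        have hdvd := Nat.dvd_of_mem_primeFactors hp
        have hple : p ≤ d := Nat.le_of_dvd (by omega) hdvd
        exact ⟨by omega, Nat.prime_of_mem_primeFactors hp, hwp p hp⟩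
      have hterm2 : ∀ d ∈ D0, (A*C₀) ^ (d.primeFactors.card) / (d:ℝ)^2
          = ∏ p ∈ d.primeFactors, (AC / (p:ℝ)^2) := by
        intro d hd
        obtain ⟨hsf, hd2, hdQ, hwp⟩ := hD0facts d hd
        rw [Finset.prod_div_distrib, Finset.prod_const, hACdef]
        congr 1
        have hpd : (∏ p ∈ d.primeFactors, p) = d := Nat.prod_primeFactors_of_squarefree hsf
        calc ((d:ℕ):ℝ)^2 = (∏ p ∈ d.primeFactors, (p:ℝ))^2 := by
              rw [← Nat.cast_prod, hpd]
          _ = ∏ p ∈ d.primeFactors, (p:ℝ)^2 := (Finset.prod_pow _ _ _).symm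
      have hinj2 : ∀ d₁ ∈ D0, ∀ d₂ ∈ D0, d₁.primeFactors = d₂.primeFactors → d₁ = d₂ := by
        intro d₁ h₁ d₂ h₂ heq
        have e₁ := Nat.prod_primeFactors_of_squarefree (hD0facts d₁ h₁).1
        have e₂ := Nat.prod_primeFactors_of_squarefree (hD0facts d₂ h₂).1
        rw [← e₁, ← e₂, heq]
      have himg2 : D0.image (fun d => d.primeFactors) ⊆ P0.powerset.erase ∅ := by
        intro s hs
        rw [Finset.mem_image] at hs
        obtain ⟨d, hd, rfl⟩ := hs
        rw [Finset.mem_erase, Finset.mem_powerset]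
        refine ⟨?_, hpfsub d hd⟩
        have := (hD0facts d hd).2.1
        have hne := Nat.nonempty_primeFactors.mpr (by omega : 1 < d)
        exact Finset.nonempty_iff_ne_empty.mp hne
      have hsum_img : ∑ d ∈ D0, (A*C₀) ^ (d.primeFactors.card) / (d:ℝ)^2
          = ∑ s ∈ D0.image (fun d => d.primeFactors), ∏ p ∈ s, (AC / ((p:ℕ):ℝ)^2) := by
        rw [Finset.sum_image (f := fun s : Finset ℕ => ∏ p ∈ s, (AC / ((p:ℕ):ℝ)^2)) hinj2]
        exact Finset.sum_congr rfl hterm2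
      have hstep : ∑ s ∈ D0.image (fun d => d.primeFactors), ∏ p ∈ s, (AC / ((p:ℕ):ℝ)^2)
          ≤ ∑ s ∈ P0.powerset.erase ∅, ∏ p ∈ s, (AC / ((p:ℕ):ℝ)^2) := by
        refine Finset.sum_le_sum_of_subset_of_nonneg himg2 ?_
        intro s hs _
        refine Finset.prod_nonneg fun p hp => ?_
        have hpP : p ∈ P0 := (Finset.mem_powerset.mp (Finset.mem_erase.mp hs).2) hp
        rw [hP0def, Finset.mem_filter] at hpP
        have : (0:ℝ) < (p:ℝ) := by exact_mod_cast hpP.2.1.pos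
        positivity
      have hprodP : ∑ s ∈ P0.powerset.erase ∅, ∏ p ∈ s, (AC / ((p:ℕ):ℝ)^2)
          = (∏ p ∈ P0, (1 + AC / (p:ℝ)^2)) - 1 := by
        have h1 : (∏ p ∈ P0, (AC / (p:ℝ)^2 + 1)) = ∑ s ∈ P0.powerset, ∏ p ∈ s, (AC / ((p:ℕ):ℝ)^2) := by
          rw [Finset.prod_add]
          refine Finset.sum_congr rfl fun s _ => by simp
        have h2 : ∑ s ∈ P0.powerset, ∏ p ∈ s, (AC / ((p:ℕ):ℝ)^2)
            = (∏ p ∈ (∅ : Finset ℕ), (AC / (p:ℝ)^2))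
              + ∑ s ∈ P0.powerset.erase ∅, ∏ p ∈ s, (AC / ((p:ℕ):ℝ)^2) :=
          (Finset.add_sum_erase _ _ (Finset.empty_mem_powerset _)).symm
        rw [Finset.prod_empty] at h2
        have h3 : (∏ p ∈ P0, (1 + AC / (p:ℝ)^2)) = ∏ p ∈ P0, (AC / (p:ℝ)^2 + 1) :=
          Finset.prod_congr rfl fun p _ => by ring
        rw [h3, h1, h2]
        ring
      have hexp : (∏ p ∈ P0, (1 + AC / (p:ℝ)^2)) ≤ Real.exp (2*AC/w) := by
        have hP0w : ∀ p ∈ P0, w < (p:ℝ) := by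
          intro p hp
          rw [hP0def, Finset.mem_filter] at hp
          exact hp.2.2
        calc (∏ p ∈ P0, (1 + AC / (p:ℝ)^2)) ≤ ∏ p ∈ P0, Real.exp (AC / (p:ℝ)^2) := by
              refine Finset.prod_le_prod ?_ ?_
              · intro p hp
                have hp2 : (0:ℝ) < (p:ℝ) := lt_trans hw0 (hP0w p hp)
                positivity
              · intro p hp
                have := Real.add_one_le_exp (AC / (p:ℝ)^2)
                linarith
          _ = Real.exp (∑ p ∈ P0, AC / (p:ℝ)^2) := (Real.exp_sum _ _).symm
          _ ≤ Real.exp (2*AC/w) := by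
              refine Real.exp_le_exp.mpr ?_
              have : ∑ p ∈ P0, AC / (p:ℝ)^2
                  = ∑ p ∈ P0, (if w < (p:ℝ) then AC / (p:ℝ)^2 else 0) := by
                refine Finset.sum_congr rfl fun p hp => ?_
                rw [if_pos (hP0w p hp)]
              rw [this]
              calc _ ≤ AC * (2/w) := ms_finset_primes_sq_sum hw _ AC hACpos.le
                _ = 2*AC/w := by ring
      have hfinal : Real.exp (2*AC/w) - 1 ≤ 2*AC*Real.exp (2*AC)/w := by
        have h4 : Real.exp (2*AC/w) ≤ Real.exp (2*AC) := by
          refine Real.exp_le_exp.mpr ?_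
          rw [div_le_iff₀ hw0]
          nlinarith [mul_le_mul_of_nonneg_left hw (by linarith : (0:ℝ) ≤ 2*AC)]
        have h0 := ms_exp_sub_one (x := 2*AC/w) (y := Real.exp (2*AC)) (by positivity) h4
        have h : (2*AC/w) * Real.exp (2*AC) = 2*AC*Real.exp (2*AC)/w := by ring
        linarith
      calc ∑ d ∈ D0, (A*C₀) ^ (d.primeFactors.card) / (d:ℝ)^2
          = ∑ s ∈ D0.image (fun d => d.primeFactors), ∏ p ∈ s, (AC / ((p:ℕ):ℝ)^2) := hsum_img
        _ ≤ ∑ s ∈ P0.powerset.erase ∅, ∏ p ∈ s, (AC / ((p:ℕ):ℝ)^2) := hstep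
        _ = (∏ p ∈ P0, (1 + AC / (p:ℝ)^2)) - 1 := hprodP
        _ ≤ Real.exp (2*AC/w) - 1 := by linarith [hexp]
        _ ≤ 2*AC*Real.exp (2*AC)/w := hfinal
    calc (H.map Small).sum ≤ ∑ d ∈ D0, (H.map (F d)).sum := step1
      _ ≤ ∑ d ∈ D0, n * ((A*C₀) ^ (d.primeFactors.card) / (d:ℝ)^2) :=
          Finset.sum_le_sum step2
      _ = n * ∑ d ∈ D0, (A*C₀) ^ (d.primeFactors.card) / (d:ℝ)^2 := by
          rw [Finset.mul_sum]
      _ ≤ n * (2*AC*Real.exp (2*AC)/w) := mul_le_mul_of_nonneg_left step3 hn.le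
  -- assemble
  set R : ℝ := 2*A*e2/w + e2 * (2*AC*Real.exp (2*AC)/w) + e2 * (C₁ * M ^ ε / (Q:ℝ)) with hRdef
  have hXle : (H.map g).sum ≤ n * (1 + R) := by
    have h1 : (H.map g).sum ≤ (H.map (fun h => 1 + 2*A*e2/w + (e2 * Small h + e2 * Big h))).sum :=
      ms_sum_map_le H _ _ (fun h _ => hφ h)
    have h2 : (H.map (fun h => 1 + 2*A*e2/w + (e2 * Small h + e2 * Big h))).sum
        = n * (1 + 2*A*e2/w) + (e2 * (H.map Small).sum + e2 * (H.map Big).sum) := by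
      rw [ms_sum_map_add H (fun h => 1 + 2*A*e2/w) (fun h => e2 * Small h + e2 * Big h)]
      rw [ms_sum_map_add H (fun h => e2 * Small h) (fun h => e2 * Big h)]
      rw [ms_sum_map_const]
      rw [Multiset.sum_map_mul_left, Multiset.sum_map_mul_left]
    have h3 : (H.map Big).sum ≤ n * (C₁ * M ^ ε / (Q:ℝ)) := by
      calc (H.map Big).sum ≤ (H.map (fun _ => C₁ * M ^ ε / (Q:ℝ))).sum :=
            ms_sum_map_le H _ _ hBigle
        _ = n * (C₁ * M ^ ε / (Q:ℝ)) := ms_sum_map_const H _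
    calc (H.map g).sum ≤ (H.map (fun h => 1 + 2*A*e2/w + (e2 * Small h + e2 * Big h))).sum := h1
      _ = n * (1 + 2*A*e2/w) + (e2 * (H.map Small).sum + e2 * (H.map Big).sum) := h2
      _ ≤ n * (1 + 2*A*e2/w) + (e2 * (n * (2*AC*Real.exp (2*AC)/w)) + e2 * (n * (C₁ * M ^ ε / (Q:ℝ)))) := by
          refine add_le_add (le_refl _) (add_le_add ?_ ?_)
          · exact mul_le_mul_of_nonneg_left hSmallsum he2pos.le
          · exact mul_le_mul_of_nonneg_left h3 he2pos.le
      _ = n * (1 + R) := by rw [hRdef]; ring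
  have hXge : n ≤ (H.map g).sum := by
    have h0 : (H.map (fun _ : Fin t → ℤ => (1:ℝ))).sum = n * 1 := ms_sum_map_const H 1
    have h1 := ms_sum_map_le H (fun _ => (1:ℝ)) g (fun h _ => hg_ge1 h)
    rw [h0] at h1
    linarith
  have hup : (H.map g).sum / n - 1 ≤ R := by
    have h1 : (H.map g).sum / n ≤ 1 + R := by
      rw [div_le_iff₀ hn]
      calc (H.map g).sum ≤ n * (1+R) := hXle
        _ = (1+R) * n := by ring
    linarith
  have hlo : 0 ≤ (H.map g).sum / n - 1 := by
    have : 1 ≤ (H.map g).sum / n := by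
      rw [le_div_iff₀ hn]
      linarith
    linarith
  -- final comparison with the RHS
  have hlog : 1 ≤ Real.log (2 + w) := by
    rw [Real.le_log_iff_exp_le (by linarith)]
    have := Real.exp_one_lt_d9
    linarith
  have hRHS : R ≤ C * (Real.log (2 + w)) ^ (1:ℝ) / w + C * M ^ ε / (Q:ℝ) := by
    rw [Real.rpow_one]
    have hC1' : e2 * (2*AC*Real.exp (2*AC) + 2*A) ≤ C * Real.log (2+w) := by
      have hCge : e2 * (2*AC*Real.exp (2*AC) + 2*A) ≤ C := by
        rw [hCdef]
        refine mul_le_mul_of_nonneg_left ?_ he2pos.le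
        linarith
      have hCpos : 0 < C := by rw [hCdef]; positivity
      calc e2 * (2*AC*Real.exp (2*AC) + 2*A) ≤ C := hCge
        _ = C * 1 := by ring
        _ ≤ C * Real.log (2+w) := mul_le_mul_of_nonneg_left hlog hCpos.le
    have h2' : e2 * C₁ ≤ C := by
      rw [hCdef]
      refine mul_le_mul_of_nonneg_left ?_ he2pos.le
      nlinarith [Real.exp_pos (2*AC)]
    have hterm1 : 2*A*e2/w + e2 * (2*AC*Real.exp (2*AC)/w) ≤ C * Real.log (2+w) / w := by
      have hnum : 2*A*e2 + e2 * (2*AC*Real.exp (2*AC)) ≤ C * Real.log (2+w) := by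
        calc 2*A*e2 + e2 * (2*AC*Real.exp (2*AC))
            = e2 * (2*AC*Real.exp (2*AC) + 2*A) := by ring
          _ ≤ C * Real.log (2+w) := hC1'
      calc 2*A*e2/w + e2 * (2*AC*Real.exp (2*AC)/w)
          = (2*A*e2 + e2 * (2*AC*Real.exp (2*AC)))/w := by ring
        _ ≤ C * Real.log (2+w) / w := by gcongr
    have hterm2 : e2 * (C₁ * M ^ ε / (Q:ℝ)) ≤ C * M ^ ε / (Q:ℝ) := by
      have hnum : e2 * (C₁ * M ^ ε) ≤ C * M ^ ε := by
        calc e2 * (C₁ * M ^ ε) = (e2 * C₁) * M ^ ε := by ring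
          _ ≤ C * M ^ ε := mul_le_mul_of_nonneg_right h2' hMε0
      calc e2 * (C₁ * M ^ ε / (Q:ℝ)) = (e2 * (C₁ * M ^ ε)) / (Q:ℝ) := by ring
        _ ≤ (C * M ^ ε) / (Q:ℝ) := by gcongr
        _ = C * M ^ ε / (Q:ℝ) := rfl
    rw [hRdef]
    linarith
  have habs : |(H.map g).sum / n - 1| = (H.map g).sum / n - 1 := abs_of_nonneg hlo
  calc |(H.map g).sum / n - 1| = (H.map g).sum / n - 1 := habs
    _ ≤ R := hup
    _ ≤ C * (Real.log (2 + w)) ^ (1:ℝ) / w + C * M ^ ε / (Q:ℝ) := hRHS
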